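/- arXiv:2506.01081 — 2 statements merged into one kernel-verified Lean document; each statement's English description precedes it below -/
import Mathlib

section
/- Let (u_k) be the aNGMRES(∞, p) iterates from u₀ and (u_k^G) the full GMRES iterates from the same u₀, and set ν = ν(A, r₀). Assume GMRES does not stagnate, i.e., u_ℓ^G ≠ u_{ℓ+1}^G for all ℓ < ν. Then, with s the integer satisfying (s−1)p < ν ≤ sp, one has u_{sp} = u_ν^G = u*. -/
open Matrix Polynomial Set

noncomputable section

/-- Matrix–vector product, landing in Euclidean space. -/
def mulVecE {n : ℕ} (M : Matrix (Fin n) (Fin n) ℝ) (v : EuclideanSpace ℝ (Fin n)) :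
    EuclideanSpace ℝ (Fin n) :=
  WithLp.toLp 2 (M.mulVec v)

/-- Residual `r(u) = A u - b`. -/
def res {n : ℕ} (A : Matrix (Fin n) (Fin n) ℝ) (b u : EuclideanSpace ℝ (Fin n)) :
    EuclideanSpace ℝ (Fin n) :=
  mulVecE A u - b

/-- Richardson fixed-point map `q(u) = (I - A) u + b = M u + b` with `M = I - A`. -/
def fp {n : ℕ} (A : Matrix (Fin n) (Fin n) ℝ) (b u : EuclideanSpace ℝ (Fin n)) :
    EuclideanSpace ℝ (Fin n) :=
  mulVecE (1 - A) u + b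

/-- The NGMRES(m) least-squares objective at step `k`:
`β ↦ ‖r(q(u_k)) + Σ_{i=0}^m β_i (r(q(u_k)) - r(u_{k-i}))‖`. -/
def ngObj {n : ℕ} (A : Matrix (Fin n) (Fin n) ℝ) (b : EuclideanSpace ℝ (Fin n))
    (m : ℕ) (prev : ℕ → EuclideanSpace ℝ (Fin n)) (k : ℕ) (β : Fin (m+1) → ℝ) : ℝ :=
  ‖res A b (fp A b (prev k)) +
    ∑ i : Fin (m+1), β i • (res A b (fp A b (prev k)) - res A b (prev (k - (i : ℕ))))‖

/-- `next` is produced from `prev (k-m), …, prev k` by a single NGMRES(m) step: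
`next = q(u_k) + Σ_{i=0}^m β_i (q(u_k) - u_{k-i})` where `β` minimizes the
least-squares objective `ngObj`. -/
def NGMRESStep {n : ℕ} (A : Matrix (Fin n) (Fin n) ℝ) (b : EuclideanSpace ℝ (Fin n))
    (m : ℕ) (prev : ℕ → EuclideanSpace ℝ (Fin n)) (k : ℕ)
    (next : EuclideanSpace ℝ (Fin n)) : Prop :=
  ∃ β : Fin (m+1) → ℝ,
    (∀ γ : Fin (m+1) → ℝ, ngObj A b m prev k β ≤ ngObj A b m prev k γ) ∧
    next = fp A b (prev k) +
      ∑ i : Fin (m+1), β i • (fp A b (prev k) - prev (k - (i : ℕ)))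

/-- The spectral (ℓ²-operator) norm of a matrix. -/
def opNorm {n : ℕ} (M : Matrix (Fin n) (Fin n) ℝ) : ℝ :=
  ‖(Matrix.toEuclideanCLM (𝕜 := ℝ) M : EuclideanSpace ℝ (Fin n) →L[ℝ] EuclideanSpace ℝ (Fin n))‖

/-- The 2-norm condition number `κ₂(U) = ‖U‖ ‖U⁻¹‖`. -/
def condNum {n : ℕ} (U : Matrix (Fin n) (Fin n) ℝ) : ℝ :=
  opNorm U * opNorm U⁻¹

/-- `ε(a,b,s)`: minimum over real polynomials `p` of degree at most `s` with `p(1) = 1`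
of `max_{t ∈ [1/b, 1/a]} |p(t)|`. -/
def eps (a b : ℝ) (s : ℕ) : ℝ :=
  sInf {t : ℝ | ∃ p : Polynomial ℝ, p.natDegree ≤ s ∧ p.eval 1 = 1 ∧
    t = sSup ((fun x => |p.eval x|) '' Set.Icc (1/b) (1/a))}

/-- `χ(s)`: minimum over real polynomials `p` of degree at most `s` with `p(1) = 1`
of `max_{λ ∈ Σ(M)} |p(λ)|`, where `Σ(M)` is the set of eigenvalues of `M`. -/
def chiSp {n : ℕ} (M : Matrix (Fin n) (Fin n) ℝ) (s : ℕ) : ℝ :=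
  sInf {t : ℝ | ∃ p : Polynomial ℝ, p.natDegree ≤ s ∧ p.eval 1 = 1 ∧
    t = sSup ((fun x => |p.eval x|) '' spectrum ℝ M)}

/-- The Krylov subspace `K_k(A, r) = span{r, Ar, …, A^{k-1} r}`. -/
def Krylov {n : ℕ} (A : Matrix (Fin n) (Fin n) ℝ) (r : EuclideanSpace ℝ (Fin n)) (k : ℕ) :
    Submodule ℝ (EuclideanSpace ℝ (Fin n)) :=
  Submodule.span ℝ (Set.range fun i : Fin k => mulVecE (A ^ (i : ℕ)) r)

/-- The matrix `S_k = [u_{k-m+1}-u_{k-m}, …, u_k-u_{k-1}, q(u_k)-u_k] ∈ ℝ^{n×(m+1)}`. -/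
def Smat {n : ℕ} (A : Matrix (Fin n) (Fin n) ℝ) (b : EuclideanSpace ℝ (Fin n))
    (prev : ℕ → EuclideanSpace ℝ (Fin n)) (k m : ℕ) :
    Matrix (Fin n) (Fin (m+1)) ℝ :=
  Matrix.of fun r c =>
    if (c : ℕ) < m then prev (k - m + c + 1) r - prev (k - m + c) r
    else fp A b (prev k) r - prev k r

/-- `u` is the sequence of aNGMRES(m, p) iterates (with `m = ⊤` giving aNGMRES(∞, p)):
if `p ∤ k` then `u_k = q(u_{k-1})`, and if `p ∣ k` then `u_k` is produced by one
NGMRES(min(m, k-1)) step from `u_{k-1-m_k}, …, u_{k-1}`. -/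
def aNGMRES {n : ℕ} (A : Matrix (Fin n) (Fin n) ℝ) (b : EuclideanSpace ℝ (Fin n))
    (m : ℕ∞) (p : ℕ) (u : ℕ → EuclideanSpace ℝ (Fin n)) : Prop :=
  ∀ k, 1 ≤ k →
    (¬ p ∣ k → u k = fp A b (u (k-1))) ∧
    (p ∣ k → NGMRESStep A b (min m ((k : ℕ∞) - 1)).toNat u (k-1) (u k))


section AuxLemmas

variable {n : ℕ} (A : Matrix (Fin n) (Fin n) ℝ) (b : EuclideanSpace ℝ (Fin n))

/-- `mulVecE A` as a linear map. -/
def lA : EuclideanSpace ℝ (Fin n) →ₗ[ℝ] EuclideanSpace ℝ (Fin n) where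
  toFun := mulVecE A
  map_add' x y := congrArg (WithLp.toLp 2) (Matrix.mulVec_add A x y)
  map_smul' c x := congrArg (WithLp.toLp 2) (Matrix.mulVec_smul A c x)

@[simp] lemma lA_apply (x : EuclideanSpace ℝ (Fin n)) : lA A x = mulVecE A x := rfl

lemma mulVecE_add (x y : EuclideanSpace ℝ (Fin n)) :
    mulVecE A (x + y) = mulVecE A x + mulVecE A y := (lA A).map_add x y

lemma mulVecE_sub (x y : EuclideanSpace ℝ (Fin n)) :
    mulVecE A (x - y) = mulVecE A x - mulVecE A y := (lA A).map_sub x y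

lemma mulVecE_smul (c : ℝ) (x : EuclideanSpace ℝ (Fin n)) :
    mulVecE A (c • x) = c • mulVecE A x := map_smul (lA A) c x

lemma mulVecE_one (x : EuclideanSpace ℝ (Fin n)) : mulVecE 1 x = x := congrArg (WithLp.toLp 2) (Matrix.one_mulVec x)

lemma mulVecE_one_sub (x : EuclideanSpace ℝ (Fin n)) :
    mulVecE (1 - A) x = x - mulVecE A x := by
  have : mulVecE (1 - A) x = mulVecE (n := n) 1 x - mulVecE A x := congrArg (WithLp.toLp 2) (Matrix.sub_mulVec 1 A x)
  rw [this, mulVecE_one]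

lemma mulVecE_pow_succ (m : ℕ) (x : EuclideanSpace ℝ (Fin n)) :
    mulVecE (A ^ (m+1)) x = mulVecE A (mulVecE (A ^ m) x) := by
  show WithLp.toLp 2 ((A ^ (m+1)).mulVec x) = WithLp.toLp 2 (A.mulVec ((A ^ m).mulVec x))
  rw [Matrix.mulVec_mulVec, pow_succ']

lemma res_add (x y : EuclideanSpace ℝ (Fin n)) :
    res A b (x + y) = res A b x + mulVecE A y := by
  unfold res; rw [mulVecE_add]; abel

lemma res_fp (v : EuclideanSpace ℝ (Fin n)) :
    res A b (fp A b v) = res A b v - mulVecE A (res A b v) := by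
  unfold res fp
  rw [mulVecE_one_sub, mulVecE_add, mulVecE_sub, mulVecE_sub]
  abel

lemma fp_sub_self (v : EuclideanSpace ℝ (Fin n)) :
    fp A b v - v = -(res A b v) := by
  unfold res fp
  rw [mulVecE_one_sub]
  abel

lemma res_sub_res (x y : EuclideanSpace ℝ (Fin n)) :
    res A b x - res A b y = mulVecE A (x - y) := by
  unfold res; rw [mulVecE_sub]; abel

variable (r0 : EuclideanSpace ℝ (Fin n))

lemma Krylov_mono {j k : ℕ} (h : j ≤ k) : Krylov A r0 j ≤ Krylov A r0 k := by
  apply Submodule.span_mono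
  rintro x ⟨i, rfl⟩
  exact ⟨⟨i.1, lt_of_lt_of_le i.2 h⟩, rfl⟩

lemma pow_mem_Krylov {i k : ℕ} (h : i < k) : mulVecE (A ^ i) r0 ∈ Krylov A r0 k :=
  Submodule.subset_span ⟨⟨i, h⟩, rfl⟩

lemma Krylov_zero : Krylov A r0 0 = ⊥ := by
  unfold Krylov
  rw [Set.range_eq_empty, Submodule.span_empty]

lemma r0_mem_Krylov {k : ℕ} (h : 1 ≤ k) : r0 ∈ Krylov A r0 k := by
  have := pow_mem_Krylov A r0 (i := 0) (k := k) h
  rwa [pow_zero, mulVecE_one] at this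

lemma map_lA_Krylov (k : ℕ) :
    (Krylov A r0 k).map (lA A) ≤ Krylov A r0 (k+1) := by
  rw [Krylov, Submodule.map_span, Submodule.span_le]
  rintro x ⟨y, ⟨i, rfl⟩, rfl⟩
  simp only [lA_apply, SetLike.mem_coe]
  rw [← mulVecE_pow_succ]
  exact pow_mem_Krylov A r0 (Nat.succ_lt_succ i.2)

lemma Krylov_succ_le (k : ℕ) (hk : 1 ≤ k) :
    Krylov A r0 (k+1) ≤ Krylov A r0 k ⊔ (Krylov A r0 k).map (lA A) := by
  rw [Krylov, Submodule.span_le]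
  rintro x ⟨⟨iv, hiv⟩, rfl⟩
  simp only [SetLike.mem_coe]
  match iv, hiv with
  | 0, _ =>
    rw [pow_zero, mulVecE_one]
    exact Submodule.mem_sup_left (r0_mem_Krylov A r0 hk)
  | (m+1), hm =>
    rw [mulVecE_pow_succ]
    exact Submodule.mem_sup_right ⟨_, pow_mem_Krylov A r0 (i := m) (by omega), rfl⟩

lemma finrank_Krylov_le (k : ℕ) : Module.finrank ℝ (Krylov A r0 k) ≤ k := by
  have := finrank_range_le_card (R := ℝ) (fun i : Fin k => mulVecE (A ^ (i : ℕ)) r0)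
  rw [Fintype.card_fin] at this
  unfold Krylov; exact this

section Grade

variable {ν : ℕ} (hgr : Module.finrank ℝ (Krylov A r0 ν) = ν)
  (hmax : ∀ ℓ : ℕ, Module.finrank ℝ (Krylov A r0 ℓ) = ℓ → ℓ ≤ ν)

include hgr in
lemma finrank_Krylov_eq {j : ℕ} (hj : j ≤ ν) :
    Module.finrank ℝ (Krylov A r0 j) = j := by
  refine le_antisymm (finrank_Krylov_le A r0 j) ?_
  have hsup : Krylov A r0 ν ≤ Krylov A r0 j ⊔
      Submodule.span ℝ (Set.range fun t : Fin (ν - j) => mulVecE (A ^ (j + (t : ℕ))) r0) := by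
    rw [Krylov, Submodule.span_le]
    rintro x ⟨⟨iv, hiv⟩, rfl⟩
    simp only [SetLike.mem_coe]
    by_cases hij : iv < j
    · exact Submodule.mem_sup_left (pow_mem_Krylov A r0 hij)
    · refine Submodule.mem_sup_right (Submodule.subset_span ⟨⟨iv - j, by omega⟩, ?_⟩)
      show mulVecE (A ^ (j + (iv - j))) r0 = mulVecE (A ^ iv) r0
      rw [Nat.add_sub_cancel' (by omega : j ≤ iv)]
  have h1 := Submodule.finrank_mono hsup
  rw [hgr] at h1
  have h2 := Submodule.finrank_sup_add_finrank_inf_eq (Krylov A r0 j)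
      (Submodule.span ℝ (Set.range fun t : Fin (ν - j) => mulVecE (A ^ (j + (t : ℕ))) r0))
  have h3 : Module.finrank ℝ
      (Submodule.span ℝ (Set.range fun t : Fin (ν - j) => mulVecE (A ^ (j + (t : ℕ))) r0)) ≤ ν - j := by
    have := finrank_range_le_card (R := ℝ) (fun t : Fin (ν - j) => mulVecE (A ^ (j + (t : ℕ))) r0)
    simpa [Set.finrank] using this
  omega

include hgr hmax in
lemma Krylov_nu_succ_eq : Krylov A r0 (ν + 1) = Krylov A r0 ν := by
  refine (Submodule.eq_of_le_of_finrank_le (Krylov_mono A r0 (by omega : ν ≤ ν + 1)) ?_).symm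
  rw [hgr]
  by_contra h
  have h1 := finrank_Krylov_le A r0 (ν + 1)
  have h2 := hmax (ν + 1) (by omega)
  omega

include hgr hmax in
lemma map_lA_Krylov_nu : (Krylov A r0 ν).map (lA A) ≤ Krylov A r0 ν := by
  refine (map_lA_Krylov A r0 ν).trans ?_
  rw [Krylov_nu_succ_eq A r0 hgr hmax]

include hgr in
lemma Krylov_sup_span_eq {k : ℕ} {x : EuclideanSpace ℝ (Fin n)} (hk : k + 1 ≤ ν)
    (hx : x ∈ Krylov A r0 (k+1)) (hx' : x ∉ Krylov A r0 k) :
    Krylov A r0 k ⊔ Submodule.span ℝ {x} = Krylov A r0 (k+1) := by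
  have hle : Krylov A r0 k ⊔ Submodule.span ℝ {x} ≤ Krylov A r0 (k+1) :=
    sup_le (Krylov_mono A r0 (Nat.le_succ k)) ((Submodule.span_singleton_le_iff_mem x _).mpr hx)
  have hlt : Krylov A r0 k < Krylov A r0 k ⊔ Submodule.span ℝ {x} := by
    refine lt_of_le_of_ne le_sup_left fun h => hx' ?_
    rw [h]
    exact Submodule.mem_sup_right (Submodule.mem_span_singleton_self x)
  have h1 := Submodule.finrank_lt_finrank_of_lt hlt
  rw [finrank_Krylov_eq A r0 hgr (by omega : k ≤ ν)] at h1
  refine Submodule.eq_of_le_of_finrank_le hle ?_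
  rw [finrank_Krylov_eq A r0 hgr hk]
  omega

include hgr in
lemma mem_of_mulVecE_mem {k : ℕ} {x : EuclideanSpace ℝ (Fin n)} (hk : k + 2 ≤ ν)
    (hx : x ∈ Krylov A r0 (k+1)) (hAx : mulVecE A x ∈ Krylov A r0 (k+1)) :
    x ∈ Krylov A r0 k := by
  by_contra h
  have hsp := Krylov_sup_span_eq A r0 hgr (by omega : k + 1 ≤ ν) hx h
  have hmapA : (Krylov A r0 (k+1)).map (lA A) ≤ Krylov A r0 (k+1) := by
    rw [← hsp, Submodule.map_sup]
    refine sup_le ((map_lA_Krylov A r0 k).trans (by rw [hsp])) ?_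
    rw [Submodule.map_span, Set.image_singleton]
    refine (Submodule.span_singleton_le_iff_mem _ _).mpr ?_
    rw [hsp]
    exact hAx
  have hle : Krylov A r0 (k+2) ≤ Krylov A r0 (k+1) :=
    (Krylov_succ_le A r0 (k+1) (by omega)).trans (sup_le le_rfl hmapA)
  have h1 := Submodule.finrank_mono hle
  rw [finrank_Krylov_eq A r0 hgr hk, finrank_Krylov_eq A r0 hgr (by omega : k + 1 ≤ ν)] at h1
  omega

include hgr in
lemma descent_false {x : EuclideanSpace ℝ (Fin n)} (hr0ne : r0 ≠ 0) (hν1 : 1 ≤ ν)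
    (hx : x ∈ Krylov A r0 (ν - 1)) (hAx : mulVecE A x = -r0) : False := by
  have key : ∀ j, x ∈ Krylov A r0 (ν - 1 - j) := by
    intro j
    induction j with
    | zero => simpa using hx
    | succ j ih =>
      by_cases h0 : ν - 1 - j = 0
      · rw [show ν - 1 - (j+1) = 0 by omega]
        rwa [h0] at ih
      · obtain ⟨m, hm⟩ : ∃ m, ν - 1 - j = m + 1 := ⟨ν - 2 - j, by omega⟩
        rw [show ν - 1 - (j+1) = m by omega]
        refine mem_of_mulVecE_mem A r0 hgr (by omega : m + 2 ≤ ν) (by rwa [hm] at ih) ?_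
        rw [hAx]
        exact Submodule.neg_mem _ (r0_mem_Krylov A r0 (by omega))
  have hx0 := key (ν - 1)
  rw [show ν - 1 - (ν - 1) = 0 by omega, Krylov_zero, Submodule.mem_bot] at hx0
  apply hr0ne
  rw [hx0] at hAx
  have h2 : (0 : EuclideanSpace ℝ (Fin n)) = -r0 := by
    rw [← hAx]
    exact (map_zero (lA A)).symm
  exact neg_eq_zero.mp h2.symm

end Grade

lemma mulVecE_injective (hA : IsUnit A) : Function.Injective (mulVecE A) := by
  obtain ⟨B, hB⟩ : ∃ B : Matrix (Fin n) (Fin n) ℝ, B * A = 1 :=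
    ⟨↑hA.unit⁻¹, hA.val_inv_mul⟩
  intro x y h
  have := congrArg (mulVecE B) h
  simp only [show ∀ z : EuclideanSpace ℝ (Fin n), mulVecE B (mulVecE A z) = z from fun z => by
    show WithLp.toLp 2 (B.mulVec (A.mulVec z)) = z
    rw [Matrix.mulVec_mulVec, hB, Matrix.one_mulVec, WithLp.toLp_ofLp]] at this
  exact this

lemma min_unique (hA : IsUnit A) (W : Submodule ℝ (EuclideanSpace ℝ (Fin n)))
    {u0 x y : EuclideanSpace ℝ (Fin n)}
    (hx : x - u0 ∈ W) (hy : y - u0 ∈ W)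
    (hmx : ∀ w ∈ W, ‖res A b x‖ ≤ ‖res A b (u0 + w)‖)
    (hmy : ∀ w ∈ W, ‖res A b y‖ ≤ ‖res A b (u0 + w)‖) : x = y := by
  have hux : u0 + (x - u0) = x := by abel
  have huy : u0 + (y - u0) = y := by abel
  have hxy : ‖res A b x‖ = ‖res A b y‖ := by
    refine le_antisymm ?_ ?_
    · have := hmx (y - u0) hy; rwa [huy] at this
    · have := hmy (x - u0) hx; rwa [hux] at this
  set a := res A b x with ha
  set c := res A b y with hc
  have hmid : res A b (u0 + (2⁻¹ : ℝ) • ((x - u0) + (y - u0))) = (2⁻¹ : ℝ) • (a + c) := by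
    rw [res_add, ha, hc]
    unfold res
    rw [mulVecE_smul, mulVecE_add, mulVecE_sub, mulVecE_sub]
    module
  have hle : ‖a‖ ≤ ‖(2⁻¹ : ℝ) • (a + c)‖ := by
    have hw : (2⁻¹ : ℝ) • ((x - u0) + (y - u0)) ∈ W := Submodule.smul_mem _ _ (W.add_mem hx hy)
    have := hmx _ hw
    rwa [hmid] at this
  have hnorm : ‖(2⁻¹ : ℝ) • (a + c)‖ = 2⁻¹ * ‖a + c‖ := by
    rw [norm_smul]; norm_num
  have hpar := parallelogram_law_with_norm ℝ a c
  have hac : a = c := by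
    have h1 : ‖a‖ ≤ 2⁻¹ * ‖a + c‖ := by rwa [hnorm] at hle
    have h2 : ‖a - c‖ = 0 := by nlinarith [norm_nonneg (a - c), norm_nonneg a, norm_nonneg (a+c), hxy]
    have := norm_sub_eq_zero_iff.mp h2
    exact this
  have : mulVecE A x = mulVecE A y := by
    have : mulVecE A x - b = mulVecE A y - b := hac
    linear_combination (norm := abel) this
  exact mulVecE_injective A hA this

lemma res_decomp (u0 x : EuclideanSpace ℝ (Fin n)) :
    res A b x = res A b u0 + mulVecE A (x - u0) := by
  have := res_add A b u0 (x - u0)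
  rwa [show u0 + (x - u0) = x by abel] at this

lemma exists_Krylov_solution (hA : IsUnit A) {ν : ℕ}
    (hgr : Module.finrank ℝ (Krylov A r0 ν) = ν)
    (hmax : ∀ ℓ : ℕ, Module.finrank ℝ (Krylov A r0 ℓ) = ℓ → ℓ ≤ ν) (hν1 : 1 ≤ ν) :
    ∃ w ∈ Krylov A r0 ν, mulVecE A w = -r0 := by
  have hmapν := map_lA_Krylov_nu A r0 hgr hmax
  have hres : ∀ x ∈ Krylov A r0 ν, lA A x ∈ Krylov A r0 ν := fun x hx =>
    hmapν ⟨x, hx, rfl⟩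
  let f : Krylov A r0 ν →ₗ[ℝ] Krylov A r0 ν := (lA A).restrict hres
  have hinj : Function.Injective f := by
    intro x y h
    have h2 : lA A x.1 = lA A y.1 := congrArg Subtype.val h
    exact Subtype.ext (mulVecE_injective A hA h2)
  have hsurj := (LinearMap.injective_iff_surjective).mp hinj
  obtain ⟨w, hw⟩ := hsurj ⟨-r0, Submodule.neg_mem _ (r0_mem_Krylov A r0 hν1)⟩
  exact ⟨w.1, w.2, congrArg Subtype.val hw⟩

end AuxLemmas

/-- if GMRES does not stagnate then aNGMRES(∞, p) reaches the exact
solution at iteration sp, where (s-1)p < ν ≤ sp. -/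
theorem stmt_12 {n p : ℕ} (hp : 1 ≤ p) (A : Matrix (Fin n) (Fin n) ℝ) (hA : IsUnit A)
    (b ustar : EuclideanSpace ℝ (Fin n)) (hustar : mulVecE A ustar = b)
    (u uG : ℕ → EuclideanSpace ℝ (Fin n))
    (hu : aNGMRES A b ⊤ p u) (hG0 : uG 0 = u 0)
    (hG : ∀ k : ℕ, (uG k - u 0) ∈ Krylov A (res A b (u 0)) k ∧
      ∀ w ∈ Krylov A (res A b (u 0)) k, ‖res A b (uG k)‖ ≤ ‖res A b (u 0 + w)‖)
    (ν : ℕ)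
    (hν : IsGreatest {ℓ : ℕ | Module.finrank ℝ (Krylov A (res A b (u 0)) ℓ) = ℓ} ν)
    (hstag : ∀ ℓ < ν, uG ℓ ≠ uG (ℓ+1))
    (s : ℕ) (hs1 : (s-1) * p < ν) (hs2 : ν ≤ s * p) :
    u (s * p) = uG ν ∧ uG ν = ustar := by
  classical
  obtain ⟨hgr0, hmax0⟩ := hν
  set r0 : EuclideanSpace ℝ (Fin n) := res A b (u 0) with hr0def
  have hgr : Module.finrank ℝ (Krylov A r0 ν) = ν := hgr0
  have hmax : ∀ ℓ : ℕ, Module.finrank ℝ (Krylov A r0 ℓ) = ℓ → ℓ ≤ ν := fun ℓ h => hmax0 h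
  have hν1 : 1 ≤ ν := by omega
  have hsp1 : 1 ≤ s * p := le_trans hν1 hs2
  have hmapν : (Krylov A r0 ν).map (lA A) ≤ Krylov A r0 ν := map_lA_Krylov_nu A r0 hgr hmax
  have hmapmem : ∀ x ∈ Krylov A r0 ν, mulVecE A x ∈ Krylov A r0 ν := fun x hx =>
    hmapν ⟨x, hx, rfl⟩
  have hr0ne : r0 ≠ 0 := by
    intro h
    have h1 : Krylov A r0 1 = ⊥ := by
      rw [Krylov]
      refine Submodule.span_eq_bot.mpr ?_
      rintro x ⟨i, rfl⟩
      show mulVecE (A ^ (i : ℕ)) r0 = 0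
      rw [h]
      exact map_zero (lA (A ^ (i : ℕ)))
    have h2 := finrank_Krylov_eq A r0 hgr hν1
    rw [h1, finrank_bot] at h2
    omega
  -- the span of increments
  set V : ℕ → Submodule ℝ (EuclideanSpace ℝ (Fin n)) :=
    fun k => Submodule.span ℝ (Set.range fun j : Fin k => u ((j : ℕ)+1) - u (j : ℕ)) with hVdef
  have hVmono : ∀ {j k : ℕ}, j ≤ k → V j ≤ V k := fun {j k} h => Submodule.span_mono (by
    rintro x ⟨i, rfl⟩; exact ⟨⟨i.1, lt_of_lt_of_le i.2 h⟩, rfl⟩)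
  have hVgen : ∀ {j k : ℕ}, j < k → u (j+1) - u j ∈ V k := fun {j k} h =>
    Submodule.subset_span ⟨⟨j, h⟩, rfl⟩
  have hT : ∀ j, u j - u 0 ∈ V j := by
    intro j
    induction j with
    | zero => simpa using (V 0).zero_mem
    | succ j ih =>
      have h : u (j+1) - u 0 = (u (j+1) - u j) + (u j - u 0) := by abel
      rw [h]
      exact (V (j+1)).add_mem (hVgen (Nat.lt_succ_self j)) (hVmono (Nat.le_succ j) ih)
  have hresd : ∀ x, res A b x = r0 + mulVecE A (x - u 0) := fun x => res_decomp A b (u 0) x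
  obtain ⟨wsol, hwsolK, hwsolA⟩ := exists_Krylov_solution A r0 hA hgr hmax hν1
  have hwsolz : res A b (u 0 + wsol) = 0 := by
    rw [res_add, hwsolA, ← hr0def]
    abel
  -- main strong induction
  have main : ∀ k, k ≤ s * p →
      ((k < s * p → (u k - u 0 ∈ Krylov A r0 (min k ν)) ∧ (Krylov A r0 (min k ν) ≤ V k) ∧
        (k < ν → res A b (u k) ∈ Krylov A r0 (k+1) ∧ res A b (u k) ∉ Krylov A r0 k)) ∧
       (1 ≤ k → p ∣ k → ∀ w ∈ Krylov A r0 (min k ν),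
          ‖res A b (u k)‖ ≤ ‖res A b (u 0 + w)‖)) := by
    intro k
    induction k using Nat.strong_induction_on with
    | _ k IH =>
    intro hksp
    match k, hksp with
    | 0, _ =>
      constructor
      · intro _
        refine ⟨by simpa using (Krylov A r0 (min 0 ν)).zero_mem, ?_, ?_⟩
        · rw [show min 0 ν = 0 by omega, Krylov_zero]
          exact bot_le
        · intro _
          refine ⟨r0_mem_Krylov A r0 le_rfl, ?_⟩
          rw [Krylov_zero]
          simpa using hr0ne
      · intro h; omega
    | (k'+1), hksp =>
    have hk'sp : k' < s * p := by omega
    by_cases hdvd : p ∣ (k'+1)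
    · -- NGMRES step
      have hstep := (hu (k'+1) (by omega)).2 hdvd
      have hmval : (min (⊤:ℕ∞) (((k'+1 : ℕ) : ℕ∞) - 1)).toNat = k' := by
        rw [min_eq_right le_top, ← Nat.cast_one (R := ℕ∞), ← ENat.coe_sub, ENat.toNat_coe]
        omega
      rw [hmval, Nat.add_sub_cancel] at hstep
      obtain ⟨β, hβmin, hβeq⟩ := hstep
      set g : Fin (k'+1) → EuclideanSpace ℝ (Fin n) :=
        fun i => fp A b (u k') - u (k' - (i : ℕ)) with hgdef
      set S : Submodule ℝ (EuclideanSpace ℝ (Fin n)) := Submodule.span ℝ (Set.range g) with hSdef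
      -- residual of a candidate point
      have F0 : ∀ γ : Fin (k'+1) → ℝ,
          res A b (fp A b (u k') + ∑ i, γ i • g i) =
            res A b (fp A b (u k')) +
              ∑ i, γ i • (res A b (fp A b (u k')) - res A b (u (k' - (i : ℕ)))) := by
        intro γ
        rw [res_add]
        congr 1
        rw [show mulVecE A (∑ i, γ i • g i) = lA A (∑ i, γ i • g i) from rfl, map_sum]
        refine Finset.sum_congr rfl fun i _ => ?_
        rw [_root_.map_smul, res_sub_res]
        rfl
      have F1 : ∀ γ : Fin (k'+1) → ℝ,
          ‖res A b (u (k'+1))‖ ≤ ‖res A b (fp A b (u k') + ∑ i, γ i • g i)‖ := by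
        intro γ
        have h1 : res A b (u (k'+1)) =
            res A b (fp A b (u k')) +
              ∑ i, β i • (res A b (fp A b (u k')) - res A b (u (k' - (i : ℕ)))) := by
          rw [hβeq]
          exact F0 β
        rw [F0 γ, h1]
        exact hβmin γ
      have F2 : ∀ v, v - fp A b (u k') ∈ S → ‖res A b (u (k'+1))‖ ≤ ‖res A b v‖ := by
        intro v hv
        obtain ⟨γ, hγ⟩ := (Submodule.mem_span_range_iff_exists_fun (R := ℝ)).mp hv
        have h1 : v = fp A b (u k') + ∑ i, γ i • g i := by rw [hγ]; abel
        rw [h1]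
        exact F1 γ
      -- membership facts in S
      have hgen : ∀ j, j ≤ k' → fp A b (u k') - u j ∈ S := by
        intro j hj
        refine Submodule.subset_span ⟨⟨k' - j, by omega⟩, ?_⟩
        show fp A b (u k') - u (k' - (k' - j)) = fp A b (u k') - u j
        rw [Nat.sub_sub_self hj]
      have hVS : V k' ≤ S := by
        rw [hVdef]
        refine Submodule.span_le.mpr ?_
        rintro x ⟨⟨j, hj⟩, rfl⟩
        show u (j+1) - u j ∈ S
        have h := S.sub_mem (hgen j (by omega)) (hgen (j+1) (by omega))
        rwa [show (fp A b (u k') - u j) - (fp A b (u k') - u (j+1)) = u (j+1) - u j by abel] at h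
      have hfpS : fp A b (u k') - u k' ∈ S := hgen k' le_rfl
      have hfpu0S : fp A b (u k') - u 0 ∈ S := by
        have h := S.add_mem hfpS (hVS (hT k'))
        rwa [show (fp A b (u k') - u k') + (u k' - u 0) = fp A b (u k') - u 0 by abel] at h
      have hresS : res A b (u k') ∈ S := by
        have h := S.neg_mem hfpS
        rwa [fp_sub_self, neg_neg] at h
      -- S contains the Krylov space
      have hKS : Krylov A r0 (min (k'+1) ν) ≤ S := by
        by_cases hcase : k' < ν
        · have hmin : min (k'+1) ν = k'+1 := by omega
          obtain ⟨hc1, hc2⟩ := ((IH k' (by omega) (by omega)).1 hk'sp).2.2 hcase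
          have hKV := ((IH k' (by omega) (by omega)).1 hk'sp).2.1
          rw [show min k' ν = k' by omega] at hKV
          rw [hmin, ← Krylov_sup_span_eq A r0 hgr (by omega : k' + 1 ≤ ν) hc1 hc2]
          exact sup_le (le_trans hKV hVS)
            ((Submodule.span_singleton_le_iff_mem _ _).mpr hresS)
        · have hKV := ((IH k' (by omega) (by omega)).1 hk'sp).2.1
          rw [show min k' ν = ν by omega] at hKV
          rw [show min (k'+1) ν = ν by omega]
          exact le_trans hKV hVS
      -- minimality over the Krylov space
      have F3 : ∀ w ∈ Krylov A r0 (min (k'+1) ν),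
          ‖res A b (u (k'+1))‖ ≤ ‖res A b (u 0 + w)‖ := by
        intro w hw
        refine F2 _ ?_
        rw [show u 0 + w - fp A b (u k') = w - (fp A b (u k') - u 0) by abel]
        exact S.sub_mem (hKS hw) hfpu0S
      -- (a)
      have hresK' : res A b (u k') ∈ Krylov A r0 (min (k'+1) ν) := by
        by_cases hcase : k' < ν
        · have := (((IH k' (by omega) (by omega)).1 hk'sp).2.2 hcase).1
          rwa [show min (k'+1) ν = k'+1 by omega]
        · have hu' := ((IH k' (by omega) (by omega)).1 hk'sp).1
          rw [show min k' ν = ν by omega] at hu'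
          rw [show min (k'+1) ν = ν by omega, hresd (u k')]
          exact Submodule.add_mem _ (r0_mem_Krylov A r0 hν1) (hmapmem _ hu')
      have hfpu0K : fp A b (u k') - u 0 ∈ Krylov A r0 (min (k'+1) ν) := by
        have hu' := ((IH k' (by omega) (by omega)).1 hk'sp).1
        have hu'' : u k' - u 0 ∈ Krylov A r0 (min (k'+1) ν) :=
          Krylov_mono A r0 (by omega) hu'
        have h := Submodule.add_mem _ hu'' (Submodule.neg_mem _ hresK')
        rwa [show (u k' - u 0) + -(res A b (u k')) =
          (fp A b (u k') - u k') + (u k' - u 0) by rw [fp_sub_self]; abel,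
          show (fp A b (u k') - u k') + (u k' - u 0) = fp A b (u k') - u 0 by abel] at h
      have hgK : ∀ i : Fin (k'+1), g i ∈ Krylov A r0 (min (k'+1) ν) := by
        intro i
        have hu' := ((IH (k' - (i : ℕ)) (by omega) (by omega)).1 (by omega)).1
        have hu'' : u (k' - (i : ℕ)) - u 0 ∈ Krylov A r0 (min (k'+1) ν) :=
          Krylov_mono A r0 (by omega) hu'
        have h := Submodule.sub_mem _ hfpu0K hu''
        rwa [show (fp A b (u k') - u 0) - (u (k' - (i : ℕ)) - u 0) =
          fp A b (u k') - u (k' - (i : ℕ)) by abel] at h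
      have ha : u (k'+1) - u 0 ∈ Krylov A r0 (min (k'+1) ν) := by
        rw [hβeq, show (fp A b (u k') + ∑ i, β i • g i) - u 0 =
          (fp A b (u k') - u 0) + ∑ i, β i • g i by abel]
        exact Submodule.add_mem _ hfpu0K
          (Submodule.sum_mem _ fun i _ => Submodule.smul_mem _ _ (hgK i))
      -- (c)
      have hbc : k' + 1 < ν →
          res A b (u (k'+1)) ∈ Krylov A r0 (k'+1+1) ∧
            res A b (u (k'+1)) ∉ Krylov A r0 (k'+1) := by
        intro hlt
        have hminK : ∀ w ∈ Krylov A r0 (k'+1), ‖res A b (u (k'+1))‖ ≤ ‖res A b (u 0 + w)‖ :=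
          fun w hw => F3 w (by rwa [show min (k'+1) ν = k'+1 by omega])
        have hain : u (k'+1) - u 0 ∈ Krylov A r0 (k'+1) := by
          have h := ha
          rwa [show min (k'+1) ν = k'+1 by omega] at h
        have hin : res A b (u (k'+1)) ∈ Krylov A r0 (k'+1+1) := by
          rw [hresd]
          exact Submodule.add_mem _ (r0_mem_Krylov A r0 (by omega))
            (map_lA_Krylov A r0 (k'+1) ⟨_, hain, rfl⟩)
        refine ⟨hin, fun hmem => ?_⟩
        have hAw : mulVecE A (u (k'+1) - u 0) ∈ Krylov A r0 (k'+1) := by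
          have h2 : mulVecE A (u (k'+1) - u 0) = res A b (u (k'+1)) - r0 := by
            rw [hresd]; abel
          rw [h2]
          exact Submodule.sub_mem _ hmem (r0_mem_Krylov A r0 (by omega))
        have hw' : u (k'+1) - u 0 ∈ Krylov A r0 k' :=
          mem_of_mulVecE_mem A r0 hgr (by omega : k' + 2 ≤ ν) hain hAw
        have huG1 : u (k'+1) = uG (k'+1) :=
          min_unique A b hA (Krylov A r0 (k'+1)) hain (hG (k'+1)).1 hminK (hG (k'+1)).2
        have huG0 : u (k'+1) = uG k' :=
          min_unique A b hA (Krylov A r0 k') hw' (hG k').1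
            (fun w hw => hminK w (Krylov_mono A r0 (by omega) hw)) (hG k').2
        exact hstag k' (by omega) (huG0.symm.trans huG1)
      -- (b)
      have hb : Krylov A r0 (min (k'+1) ν) ≤ V (k'+1) := by
        have hx1 : u (k'+1) - u k' ∈ Krylov A r0 (k'+1) := by
          have h1 : u (k'+1) - u 0 ∈ Krylov A r0 (k'+1) :=
            Krylov_mono A r0 (by omega) ha
          have h2 : u k' - u 0 ∈ Krylov A r0 (k'+1) :=
            Krylov_mono A r0 (by omega) ((IH k' (by omega) (by omega)).1 hk'sp).1
          have h := Submodule.sub_mem _ h1 h2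
          rwa [show (u (k'+1) - u 0) - (u k' - u 0) = u (k'+1) - u k' by abel] at h
        have hKVk : k' ≤ ν → Krylov A r0 k' ≤ V (k'+1) := by
          intro hkν
          have hKV := ((IH k' (by omega) (by omega)).1 hk'sp).2.1
          rw [show min k' ν = k' by omega] at hKV
          exact le_trans hKV (hVmono (by omega))
        rcases lt_trichotomy (k'+1) ν with hlt | heq | hgt
        · rw [show min (k'+1) ν = k'+1 by omega]
          obtain ⟨_, hknot⟩ := hbc hlt
          have hx2 : u (k'+1) - u k' ∉ Krylov A r0 k' := by
            intro hmem
            apply hknot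
            have hy : u (k'+1) - u 0 ∈ Krylov A r0 k' := by
              have h3 := ((IH k' (by omega) (by omega)).1 hk'sp).1
              rw [show min k' ν = k' by omega] at h3
              have h := Submodule.add_mem _ hmem h3
              rwa [show (u (k'+1) - u k') + (u k' - u 0) = u (k'+1) - u 0 by abel] at h
            rw [hresd]
            exact Submodule.add_mem _ (r0_mem_Krylov A r0 (by omega))
              (map_lA_Krylov A r0 k' ⟨_, hy, rfl⟩)
          rw [← Krylov_sup_span_eq A r0 hgr (by omega : k' + 1 ≤ ν) hx1 hx2]
          exact sup_le (hKVk (by omega))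
            ((Submodule.span_singleton_le_iff_mem _ _).mpr (hVgen (by omega)))
        · rw [show min (k'+1) ν = k'+1 by omega]
          have hres0 : res A b (u (k'+1)) = 0 := by
            have h1 := F3 wsol (by rwa [show min (k'+1) ν = ν by omega])
            rw [hwsolz, norm_zero] at h1
            exact norm_le_zero_iff.mp h1
          have hx2 : u (k'+1) - u k' ∉ Krylov A r0 k' := by
            intro hmem
            have hy : u (k'+1) - u 0 ∈ Krylov A r0 k' := by
              have h := Submodule.add_mem _ hmem
                (show u k' - u 0 ∈ Krylov A r0 k' from by
                  have h3 := ((IH k' (by omega) (by omega)).1 hk'sp).1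
                  rwa [show min k' ν = k' by omega] at h3)
              rwa [show (u (k'+1) - u k') + (u k' - u 0) = u (k'+1) - u 0 by abel] at h
            have hAy : mulVecE A (u (k'+1) - u 0) = -r0 := by
              have h4 := hresd (u (k'+1))
              rw [hres0] at h4
              exact eq_neg_of_add_eq_zero_right h4.symm
            exact descent_false A r0 hgr hr0ne hν1
              (show u (k'+1) - u 0 ∈ Krylov A r0 (ν - 1) by
                rwa [show ν - 1 = k' by omega]) hAy
          rw [← Krylov_sup_span_eq A r0 hgr (by omega : k' + 1 ≤ ν) hx1 hx2]
          exact sup_le (hKVk (by omega))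
            ((Submodule.span_singleton_le_iff_mem _ _).mpr (hVgen (by omega)))
        · have hKV := ((IH k' (by omega) (by omega)).1 hk'sp).2.1
          rw [show min k' ν = ν by omega] at hKV
          rw [show min (k'+1) ν = ν by omega]
          exact le_trans hKV (hVmono (by omega))
      exact ⟨fun _ => ⟨ha, hb, hbc⟩, fun _ _ => F3⟩
    · -- Richardson step
      have hueq : u (k'+1) = fp A b (u k') := by
        have h := (hu (k'+1) (by omega)).1 hdvd
        rwa [Nat.add_sub_cancel] at h
      have hdiff : u (k'+1) - u k' = -(res A b (u k')) := by
        rw [hueq]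
        exact fp_sub_self A b (u k')
      have hIH := (IH k' (by omega) (by omega)).1 hk'sp
      -- res of previous iterate lies in the right Krylov space
      have hresK' : res A b (u k') ∈ Krylov A r0 (min (k'+1) ν) := by
        by_cases hcase : k' < ν
        · have h := (hIH.2.2 hcase).1
          exact Krylov_mono A r0 (by omega) h
        · have hu' := hIH.1
          rw [show min k' ν = ν by omega] at hu'
          rw [show min (k'+1) ν = ν by omega, hresd (u k')]
          exact Submodule.add_mem _ (r0_mem_Krylov A r0 hν1) (hmapmem _ hu')
      have ha : u (k'+1) - u 0 ∈ Krylov A r0 (min (k'+1) ν) := by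
        have h := Submodule.add_mem _
          (Submodule.neg_mem _ hresK')
          (Krylov_mono A r0 (by omega : min k' ν ≤ min (k'+1) ν) hIH.1)
        rwa [show -(res A b (u k')) + (u k' - u 0) = (u (k'+1) - u k') + (u k' - u 0) by
            rw [hdiff],
          show (u (k'+1) - u k') + (u k' - u 0) = u (k'+1) - u 0 by abel] at h
      have hc : k' + 1 < ν →
          res A b (u (k'+1)) ∈ Krylov A r0 (k'+1+1) ∧
            res A b (u (k'+1)) ∉ Krylov A r0 (k'+1) := by
        intro hlt
        obtain ⟨hc1, hc2⟩ := hIH.2.2 (by omega)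
        have hres_eq : res A b (u (k'+1)) = res A b (u k') - mulVecE A (res A b (u k')) := by
          rw [hueq, res_fp]
        constructor
        · rw [hres_eq]
          exact Submodule.sub_mem _ (Krylov_mono A r0 (by omega) hc1)
            (map_lA_Krylov A r0 (k'+1) ⟨_, hc1, rfl⟩)
        · intro hmem
          have hAr : mulVecE A (res A b (u k')) ∈ Krylov A r0 (k'+1) := by
            have h2 : mulVecE A (res A b (u k')) =
                res A b (u k') - res A b (u (k'+1)) := by
              rw [hres_eq]; abel
            rw [h2]
            exact Submodule.sub_mem _ hc1 hmem
          exact hc2 (mem_of_mulVecE_mem A r0 hgr (by omega : k' + 2 ≤ ν) hc1 hAr)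
      have hb : Krylov A r0 (min (k'+1) ν) ≤ V (k'+1) := by
        by_cases hcase : k' < ν
        · obtain ⟨hc1, hc2⟩ := hIH.2.2 hcase
          rw [show min (k'+1) ν = k'+1 by omega,
            ← Krylov_sup_span_eq A r0 hgr (by omega : k' + 1 ≤ ν) hc1 hc2]
          refine sup_le ?_ ?_
          · have hKV := hIH.2.1
            rw [show min k' ν = k' by omega] at hKV
            exact le_trans hKV (hVmono (by omega))
          · refine (Submodule.span_singleton_le_iff_mem _ _).mpr ?_
            have h := (V (k'+1)).neg_mem (hVgen (by omega : k' < k' + 1))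
            rwa [hdiff, neg_neg] at h
        · have hKV := hIH.2.1
          rw [show min k' ν = ν by omega] at hKV
          rw [show min (k'+1) ν = ν by omega]
          exact le_trans hKV (hVmono (by omega))
      exact ⟨fun _ => ⟨ha, hb, hc⟩, fun _ hdvd' => absurd hdvd' hdvd⟩
  -- conclusion
  have hmin_sp := (main (s*p) le_rfl).2 hsp1 (dvd_mul_left p s)
  have hres_usp : res A b (u (s*p)) = 0 := by
    have h1 := hmin_sp wsol (by rwa [show min (s*p) ν = ν by omega])
    rw [hwsolz, norm_zero] at h1
    exact norm_le_zero_iff.mp h1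
  have hres_uG : res A b (uG ν) = 0 := by
    have h1 := (hG ν).2 wsol hwsolK
    rw [hwsolz, norm_zero] at h1
    exact norm_le_zero_iff.mp h1
  have hsol : ∀ x, res A b x = 0 → x = ustar := by
    intro x hx
    apply mulVecE_injective A hA
    rw [hustar]
    exact sub_eq_zero.mp hx
  exact ⟨(hsol _ hres_usp).trans (hsol _ hres_uG).symm, hsol _ hres_uG⟩


end
end

section
/- Assume ‖M‖ = c < 1. Then for any m (a nonnegative integer or ∞), any p ≥ 1, and any initial guess u₀, the aNGMRES(m, p) iterates satisfy ‖r_k‖ ≤ c ‖r_{k−1}‖ for every k ≥ 1; in particular the residual norms ‖r_k‖ converge to zero. -/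
open Matrix Polynomial Set

noncomputable section

lemma mulVecE_eq_clm {n : ℕ} (M : Matrix (Fin n) (Fin n) ℝ) (v : EuclideanSpace ℝ (Fin n)) :
    mulVecE M v = (Matrix.toEuclideanCLM (𝕜 := ℝ) M) v := rfl

lemma norm_mulVecE_le {n : ℕ} (M : Matrix (Fin n) (Fin n) ℝ) (v : EuclideanSpace ℝ (Fin n)) :
    ‖mulVecE M v‖ ≤ opNorm M * ‖v‖ := by
  rw [mulVecE_eq_clm]
  exact (Matrix.toEuclideanCLM (𝕜 := ℝ) M : EuclideanSpace ℝ (Fin n) →L[ℝ]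
    EuclideanSpace ℝ (Fin n)).le_opNorm v

lemma res_fp_eq {n : ℕ} (A : Matrix (Fin n) (Fin n) ℝ) (b u : EuclideanSpace ℝ (Fin n)) :
    res A b (fp A b u) = mulVecE (1 - A) (res A b u) := by
  simp only [res, fp, mulVecE_eq_clm, map_sub, _root_.map_one, map_add,
    ContinuousLinearMap.sub_apply, ContinuousLinearMap.one_apply]
  abel

lemma res_comb {n : ℕ} (A : Matrix (Fin n) (Fin n) ℝ) (b : EuclideanSpace ℝ (Fin n))
    {m : ℕ} (x : EuclideanSpace ℝ (Fin n)) (y : Fin (m+1) → EuclideanSpace ℝ (Fin n))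
    (β : Fin (m+1) → ℝ) :
    res A b (x + ∑ i : Fin (m+1), β i • (x - y i)) =
      res A b x + ∑ i : Fin (m+1), β i • (res A b x - res A b (y i)) := by
  simp only [res, mulVecE_eq_clm, map_add, map_sum, _root_.map_smul, map_sub,
    sub_sub_sub_cancel_right]
  abel

lemma ngObj_zero {n : ℕ} (A : Matrix (Fin n) (Fin n) ℝ) (b : EuclideanSpace ℝ (Fin n))
    (m : ℕ) (prev : ℕ → EuclideanSpace ℝ (Fin n)) (k : ℕ) :
    ngObj A b m prev k 0 = ‖res A b (fp A b (prev k))‖ := by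
  simp [ngObj]

/-- if `‖M‖ = c < 1` then aNGMRES(m, p) contracts residual norms for any
m (finite or ∞), any p ≥ 1 and any initial guess; in particular `‖r_k‖ → 0`. -/
theorem stmt_13 {n p : ℕ} (hp : 1 ≤ p) (m : ℕ∞) (A : Matrix (Fin n) (Fin n) ℝ)
    (hA : IsUnit A) (b : EuclideanSpace ℝ (Fin n)) (c : ℝ)
    (hc : opNorm ((1 : Matrix (Fin n) (Fin n) ℝ) - A) = c) (hc1 : c < 1)
    (u : ℕ → EuclideanSpace ℝ (Fin n)) (hu : aNGMRES A b m p u) :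
    (∀ k, 1 ≤ k → ‖res A b (u k)‖ ≤ c * ‖res A b (u (k-1))‖) ∧
      Filter.Tendsto (fun k => ‖res A b (u k)‖) Filter.atTop (nhds 0) := by
  have hc0 : 0 ≤ c := hc ▸ norm_nonneg _
  have key : ∀ k, 1 ≤ k → ‖res A b (u k)‖ ≤ c * ‖res A b (u (k-1))‖ := by
    intro k hk
    have hstep : ‖res A b (fp A b (u (k-1)))‖ ≤ c * ‖res A b (u (k-1))‖ := by
      rw [res_fp_eq, ← hc]
      exact norm_mulVecE_le _ _
    by_cases hd : p ∣ k
    · obtain ⟨β, hmin, heq⟩ := (hu k hk).2 hd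
      have hres : res A b (u k) = res A b (fp A b (u (k-1))) +
          ∑ i : Fin ((min m ((k : ℕ∞) - 1)).toNat + 1),
            β i • (res A b (fp A b (u (k-1))) - res A b (u ((k-1) - (i : ℕ)))) := by
        rw [heq]; exact res_comb A b _ _ β
      calc ‖res A b (u k)‖ = ngObj A b (min m ((k : ℕ∞) - 1)).toNat u (k-1) β := by
            rw [ngObj, ← hres]
        _ ≤ ngObj A b (min m ((k : ℕ∞) - 1)).toNat u (k-1) 0 := hmin 0
        _ = ‖res A b (fp A b (u (k-1)))‖ := ngObj_zero A b _ u (k-1)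
        _ ≤ c * ‖res A b (u (k-1))‖ := hstep
    · rw [(hu k hk).1 hd]; exact hstep
  refine ⟨key, ?_⟩
  have hbd : ∀ k, ‖res A b (u k)‖ ≤ c ^ k * ‖res A b (u 0)‖ := by
    intro k
    induction k with
    | zero => simp
    | succ k ih =>
      have h1 := key (k+1) (by omega)
      simp only [Nat.add_sub_cancel] at h1
      calc ‖res A b (u (k+1))‖ ≤ c * ‖res A b (u k)‖ := h1
        _ ≤ c * (c ^ k * ‖res A b (u 0)‖) := by
            exact mul_le_mul_of_nonneg_left ih hc0
        _ = c ^ (k+1) * ‖res A b (u 0)‖ := by ring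
  have hpow : Filter.Tendsto (fun k : ℕ => c ^ k * ‖res A b (u 0)‖)
      Filter.atTop (nhds 0) := by
    have := tendsto_pow_atTop_nhds_zero_of_lt_one hc0 hc1
    simpa using this.mul_const ‖res A b (u 0)‖
  exact squeeze_zero (fun k => norm_nonneg _) hbd hpow

end
end
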